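/- Let d ≥ 1, let c ∈ ℤ^d with c ≠ 0, let Λ be a real number with Λ ≥ 3, and suppose (a,b) ∈ D_Λ^+(c). Let ã, b̃ ∈ ℤ^d and set Ω = Λ − max(|ã − a|, |b̃ − b|) − 2. If Ω ≥ 3, then (ã, b̃) ∈ D_Ω^+(c). -/

import Mathlib

/-- The lattice point `a ∈ ℤ^d` viewed as a vector in Euclidean space `ℝ^d`. -/
noncomputable def latt {d : ℕ} (a : Fin d → ℤ) : EuclideanSpace ℝ (Fin d) :=
  WithLp.toLp 2 (fun i => (a i : ℝ))

/-- The Lipschitz domain `D_Λ^+(c)`: the pair `(a, b)` belongs to it iff there are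
`a', b' ∈ ℤ^d` and a real `t ≥ 0` with `a = a' + tc`, `b = b' + tc`,
`|a| ≥ Λ(|a'| + |c|)|c|`, `|b| ≥ Λ(|b'| + |c|)|c|`, and
`|a|/|c| ≥ 2Λ²`, `|b|/|c| ≥ 2Λ²`. -/
def LipDom {d : ℕ} (Λ : ℝ) (c a b : Fin d → ℤ) : Prop :=
  ∃ (a' b' : Fin d → ℤ) (t : ℝ), 0 ≤ t ∧
    latt a = latt a' + t • latt c ∧
    latt b = latt b' + t • latt c ∧
    Λ * (‖latt a'‖ + ‖latt c‖) * ‖latt c‖ ≤ ‖latt a‖ ∧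
    Λ * (‖latt b'‖ + ‖latt c‖) * ‖latt c‖ ≤ ‖latt b‖ ∧
    2 * Λ ^ 2 ≤ ‖latt a‖ / ‖latt c‖ ∧
    2 * Λ ^ 2 ≤ ‖latt b‖ / ‖latt c‖

lemma latt_add {d : ℕ} (x y : Fin d → ℤ) : latt (x + y) = latt x + latt y := by
  ext i
  simp [latt]

lemma latt_sub {d : ℕ} (x y : Fin d → ℤ) : latt (x - y) = latt x - latt y := by
  ext i
  simp [latt]

lemma one_le_norm_latt {d : ℕ} {c : Fin d → ℤ} (hc : c ≠ 0) : 1 ≤ ‖latt c‖ := by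
  obtain ⟨i, hi⟩ : ∃ i, c i ≠ 0 := by
    by_contra h
    push_neg at h
    exact hc (funext h)
  have h1 : (1 : ℝ) ≤ |(c i : ℝ)| := by
    rw [← Int.cast_abs]
    exact_mod_cast Int.one_le_abs hi
  have h2 : ‖latt c i‖ ^ 2 ≤ ‖latt c‖ ^ 2 := by
    rw [EuclideanSpace.norm_eq (latt c), Real.sq_sqrt (by positivity)]
    exact Finset.single_le_sum (f := fun j => ‖latt c j‖ ^ 2)
      (fun j _ => by positivity) (Finset.mem_univ i)
  have h3 : |(c i : ℝ)| = ‖latt c i‖ := by simp [latt]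
  nlinarith [norm_nonneg (latt c), h1, h2, h3]

/-- Pure real-arithmetic core of the first family of inequalities. -/
lemma key_ineq (Ω M C A A' A'' At : ℝ) (hΩ : 3 ≤ Ω) (hM : 0 ≤ M) (hC : 1 ≤ C)
    (hA'0 : 0 ≤ A')
    (h1 : (Ω + M + 2) * (A' + C) * C ≤ A) (h2 : 2 * (Ω + M + 2) ^ 2 * C ≤ A)
    (hAt : A - M ≤ At) (hA'' : A'' ≤ A' + M) :
    Ω * (A'' + C) * C ≤ At := by
  have hΩ0 : (0:ℝ) < Ω := by linarith
  have hC0 : (0:ℝ) < C := by linarith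
  have hh1 : 0 ≤ Ω * (A - (Ω + M + 2) * (A' + C) * C) := mul_nonneg hΩ0.le (by linarith)
  have hh2 : 0 ≤ (M + 2) * (A - 2 * (Ω + M + 2) ^ 2 * C) :=
    mul_nonneg (by linarith) (by linarith)
  have hbr : Ω * M * C + M ≤ 2 * (Ω + M + 2) * (M + 2) * C := by
    nlinarith [mul_nonneg (mul_nonneg hM hΩ0.le) hC0.le,
      mul_nonneg hΩ0.le (sub_nonneg.2 hC), mul_nonneg hM (sub_nonneg.2 hC)]
  have hbr' := mul_le_mul_of_nonneg_left hbr (by linarith : (0:ℝ) ≤ Ω + M + 2)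
  have key : Ω * ((A' + M) + C) * C + M ≤ A := by nlinarith [hh1, hh2, hbr']
  nlinarith [mul_nonneg (mul_nonneg hΩ0.le (by linarith : 0 ≤ A' + M - A'')) hC0.le]

/-- Pure real-arithmetic core of the second family of inequalities. -/
lemma key_ineq2 (Ω M C A At : ℝ) (hΩ : 3 ≤ Ω) (hM : 0 ≤ M) (hC : 1 ≤ C)
    (h2 : 2 * (Ω + M + 2) ^ 2 * C ≤ A) (hAt : A - M ≤ At) :
    2 * Ω ^ 2 * C ≤ At := by
  nlinarith [mul_nonneg hM (sub_nonneg.2 hC), mul_nonneg (mul_nonneg hM (by linarith : (0:ℝ) ≤ Ω)) (by linarith : (0:ℝ) ≤ C), mul_nonneg hM hM]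

/-- Corollary 2.2(iii): if `(a,b) ∈ D_Λ^+(c)` with `Λ ≥ 3`, and
`Ω = Λ − max(|ã−a|, |b̃−b|) − 2 ≥ 3`, then `(ã, b̃) ∈ D_Ω^+(c)`. -/
theorem stmt_6 {d : ℕ} (hd : 1 ≤ d) (c : Fin d → ℤ) (hc : c ≠ 0)
    (Λ : ℝ) (hΛ : 3 ≤ Λ) (a b : Fin d → ℤ) (hab : LipDom Λ c a b)
    (atil btil : Fin d → ℤ) (Ω : ℝ)
    (hΩdef : Ω = Λ - max ‖latt (atil - a)‖ ‖latt (btil - b)‖ - 2)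
    (hΩ : 3 ≤ Ω) :
    LipDom Ω c atil btil := by
  obtain ⟨a', b', t, ht, hea, heb, hA1, hB1, hA2, hB2⟩ := hab
  set M : ℝ := max ‖latt (atil - a)‖ ‖latt (btil - b)‖ with hMdef
  have hC : 1 ≤ ‖latt c‖ := one_le_norm_latt hc
  have hC0 : 0 < ‖latt c‖ := lt_of_lt_of_le one_pos hC
  have hMa : ‖latt (atil - a)‖ ≤ M := le_max_left _ _
  have hMb : ‖latt (btil - b)‖ ≤ M := le_max_right _ _
  have hM0 : 0 ≤ M := le_trans (norm_nonneg _) hMa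
  have hΛΩ : Λ = Ω + M + 2 := by rw [hΩdef]; ring
  have hA2' : 2 * Λ ^ 2 * ‖latt c‖ ≤ ‖latt a‖ := by
    rw [le_div_iff₀ hC0] at hA2; exact hA2
  have hB2' : 2 * Λ ^ 2 * ‖latt c‖ ≤ ‖latt b‖ := by
    rw [le_div_iff₀ hC0] at hB2; exact hB2
  have hna : ‖latt a‖ - M ≤ ‖latt atil‖ := by
    have h := abs_norm_sub_norm_le (latt atil) (latt a)
    rw [← latt_sub] at h
    have := (abs_le.mp (h.trans hMa)).1
    linarith
  have hnb : ‖latt b‖ - M ≤ ‖latt btil‖ := by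
    have h := abs_norm_sub_norm_le (latt btil) (latt b)
    rw [← latt_sub] at h
    have := (abs_le.mp (h.trans hMb)).1
    linarith
  have hna' : ‖latt (a' + (atil - a))‖ ≤ ‖latt a'‖ + M := by
    rw [latt_add]
    exact norm_add_le_of_le (le_refl _) hMa
  have hnb' : ‖latt (b' + (btil - b))‖ ≤ ‖latt b'‖ + M := by
    rw [latt_add]
    exact norm_add_le_of_le (le_refl _) hMb
  rw [hΛΩ] at hA1 hB1 hA2' hB2'
  refine ⟨a' + (atil - a), b' + (btil - b), t, ht, ?_, ?_, ?_, ?_, ?_, ?_⟩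
  · rw [latt_add, latt_sub, hea]
    abel
  · rw [latt_add, latt_sub, heb]
    abel
  · exact key_ineq Ω M ‖latt c‖ ‖latt a‖ ‖latt a'‖ _ _ hΩ hM0 hC (norm_nonneg _)
      hA1 hA2' hna hna'
  · exact key_ineq Ω M ‖latt c‖ ‖latt b‖ ‖latt b'‖ _ _ hΩ hM0 hC (norm_nonneg _)
      hB1 hB2' hnb hnb'
  · rw [le_div_iff₀ hC0]
    exact key_ineq2 Ω M ‖latt c‖ ‖latt a‖ _ hΩ hM0 hC hA2' hna
  · rw [le_div_iff₀ hC0]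
    exact key_ineq2 Ω M ‖latt c‖ ‖latt b‖ _ hΩ hM0 hC hB2' hnb
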